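/- Let G be a finite group and χ₁, …, χ_n irreducible characters (n ≥ 2) with χ₁(1) = max_i χ_i(1). If ⟨χ₁⋯χ_n, χ₁⋯χ_n⟩ = χ₂(1)²⋯χ_n(1)², then for every g ∈ G, either χ₁(g) = 0 or |χ₂(g)⋯χ_n(g)| = χ₂(1)⋯χ_n(1). -/

import Mathlib

open scoped BigOperators
open Module LinearMap

/-- `f : G → ℂ` is the character of some finite-dimensional complex representation of `G`. -/
def IsChar (G : Type) [Group G] (f : G → ℂ) : Prop :=
  ∃ V : FDRep ℂ G, V.character = f

/-- `f : G → ℂ` is the character of an irreducible finite-dimensional complex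
representation of `G`. -/
def IsIrrChar (G : Type) [Group G] (f : G → ℂ) : Prop :=
  ∃ V : FDRep ℂ G, CategoryTheory.Simple V ∧ V.character = f

/-- The standard inner product of class functions on a finite group. -/
noncomputable def cInner (G : Type) [Group G] [Fintype G] (f g : G → ℂ) : ℂ :=
  (Fintype.card G : ℂ)⁻¹ * ∑ x : G, f x * (starRingEnd ℂ) (g x)

/-- `|χ|`: the sum of the squares of the degrees of the distinct irreducible
constituents of `χ` (an irreducible character `f` is a constituent of `χ` iff
`⟨χ, f⟩ ≠ 0`). -/
noncomputable def charNorm (G : Type) [Group G] [Fintype G] (χ : G → ℂ) : ℝ :=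
  ∑' f : {f : G → ℂ // IsIrrChar G f ∧ cInner G χ f ≠ 0}, Complex.normSq (f.1 1)


section Helpers
theorem core_decomp {V : Type} [AddCommGroup V] [Module ℂ V] [FiniteDimensional ℂ V]
    (f : Module.End ℂ V) {m : ℕ} (hm : 0 < m) (hfm : f ^ m = 1) :
    ∃ (s : Finset ℂ) (d : ℂ → ℕ),
      (∀ μ ∈ s, μ ^ m = 1) ∧
      (∀ k : ℕ, LinearMap.trace ℂ V (f ^ k) = ∑ μ ∈ s, μ ^ k * d μ) := by
  set N : ℂ → Submodule ℂ V := fun μ => f.eigenspace μ with hN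
  have hindep : iSupIndep N := f.eigenspaces_iSupIndep
  have hss : f.IsSemisimple := by
    apply Module.End.isSemisimple_of_squarefree_aeval_eq_zero
      (p := Polynomial.X ^ m - 1)
    · exact (Polynomial.X_pow_sub_one_separable_iff.mpr (by
        exact_mod_cast Nat.cast_ne_zero.mpr hm.ne')).squarefree
    · simp [map_pow, hfm]
  have hsup : ⨆ μ, N μ = ⊤ := by
    have h1 := Module.End.iSup_maxGenEigenspace_eq_top f
    rw [← h1]
    refine iSup_congr fun μ => ?_
    exact (hss.isFinitelySemisimple.maxGenEigenspace_eq_eigenspace μ).symm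
  have hint : DirectSum.IsInternal N :=
    DirectSum.isInternal_submodule_of_iSupIndep_of_iSup_eq_top hindep hsup
  have hfin : {μ | N μ ≠ ⊥}.Finite :=
    WellFoundedGT.finite_ne_bot_of_iSupIndep hindep
  have hmem : ∀ (μ : ℂ) (x : V), x ∈ N μ → f x = μ • x := by
    intro μ x hx
    rwa [Module.End.mem_eigenspace_iff] at hx
  have hpow : ∀ (k : ℕ) (μ : ℂ) (x : V), x ∈ N μ → (f ^ k) x = μ ^ k • x := by
    intro k μ
    induction k with
    | zero => intro x hx; simp
    | succ k ih =>
      intro x hx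
      rw [pow_succ, Module.End.mul_apply, hmem μ x hx, map_smul, ih x hx, smul_smul,
        ← pow_succ']
  have hmaps : ∀ (k : ℕ) (μ : ℂ), Set.MapsTo (f ^ k) (N μ) (N μ) := by
    intro k μ x hx
    have := hpow k μ x hx
    simp only [Set.mem_setOf_eq, SetLike.mem_coe] at *
    rw [this]
    exact Submodule.smul_mem _ _ hx
  refine ⟨hfin.toFinset, fun μ => finrank ℂ (N μ), ?_, ?_⟩
  · intro μ hμ
    rw [Set.Finite.mem_toFinset] at hμ
    obtain ⟨x, hx, hx0⟩ := Submodule.exists_mem_ne_zero_of_ne_bot hμ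
    have h1 : (f ^ m) x = μ ^ m • x := hpow m μ x hx
    rw [hfm, Module.End.one_apply] at h1
    have h2 : (μ ^ m - 1) • x = 0 := by
      rw [sub_smul, one_smul, ← h1, sub_self]
    rcases smul_eq_zero.mp h2 with h | h
    · exact sub_eq_zero.mp h
    · exact absurd h hx0
  · intro k
    rw [trace_eq_sum_trace_restrict' hint hfin (hmaps k)]
    refine Finset.sum_congr rfl fun μ hμ => ?_
    have : (f ^ k).restrict (hmaps k μ) = (μ ^ k) • LinearMap.id := by
      ext x
      simp only [restrict_apply, LinearMap.smul_apply, id_apply, SetLike.val_smul]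
      exact hpow k μ x x.2
    rw [this, map_smul, trace_id, smul_eq_mul]

variable {G : Type} [Group G] [Fintype G]

theorem char_facts (V : FDRep ℂ G) (g : G) :
    ‖V.character g‖ ≤ ‖V.character 1‖ ∧
    (starRingEnd ℂ) (V.character g) = V.character g⁻¹ := by
  set m := orderOf g with hm'
  have hm : 0 < m := orderOf_pos g
  have hfm : (V.ρ g) ^ m = 1 := by rw [← map_pow, pow_orderOf_eq_one, map_one]
  obtain ⟨s, d, hroot, htr⟩ := core_decomp (V.ρ g) hm hfm
  have habs1 : ∀ μ ∈ s, ‖μ‖ = 1 := by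
    intro μ hμ
    exact Complex.norm_eq_one_of_pow_eq_one (hroot μ hμ) hm.ne'
  have hchar : ∀ k : ℕ, V.character (g ^ k) = ∑ μ ∈ s, μ ^ k * d μ := by
    intro k
    have : V.character (g ^ k) = LinearMap.trace ℂ V ((V.ρ g) ^ k) := by
      rw [FDRep.character, map_pow]
    rw [this, htr]
  have hfr : V.character 1 = ((finrank ℂ V : ℕ) : ℂ) := FDRep.char_one V
  have hsum_d : ((finrank ℂ V : ℕ) : ℂ) = ∑ μ ∈ s, (d μ : ℂ) := by
    rw [← hfr]
    simpa using hchar 0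
  have hds : ∑ μ ∈ s, (d μ : ℝ) = ((finrank ℂ V : ℕ) : ℝ) := by
    exact_mod_cast congrArg Complex.re hsum_d.symm
  have hg1 : V.character g = ∑ μ ∈ s, μ * d μ := by simpa using hchar 1
  have hginv : V.character g⁻¹ = ∑ μ ∈ s, μ ^ (m - 1) * d μ := by
    have hg : g⁻¹ = g ^ (m - 1) := by
      refine (eq_inv_of_mul_eq_one_left ?_).symm
      rw [← pow_succ, Nat.sub_add_cancel hm, pow_orderOf_eq_one]
    rw [hg, hchar]
  constructor
  · rw [hfr, hg1, Complex.norm_natCast]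
    calc ‖∑ μ ∈ s, μ * d μ‖ ≤ ∑ μ ∈ s, ‖μ * (d μ : ℂ)‖ := by
          simpa using norm_sum_le s (fun μ => μ * (d μ : ℂ))
      _ = ∑ μ ∈ s, (d μ : ℝ) := by
          refine Finset.sum_congr rfl fun μ hμ => ?_
          rw [norm_mul, habs1 μ hμ, one_mul, Complex.norm_natCast]
      _ = _ := hds
  · rw [hg1, hginv, map_sum]
    refine Finset.sum_congr rfl fun μ hμ => ?_
    rw [map_mul, Complex.conj_natCast]
    congr 1
    have h1 : (starRingEnd ℂ) μ = μ⁻¹ := (Complex.inv_eq_conj (habs1 μ hμ)).symm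
    rw [h1]
    refine (eq_inv_of_mul_eq_one_left ?_).symm
    rw [← pow_succ, Nat.sub_add_cancel hm, hroot μ hμ]

theorem char_sum_normSq (V : FDRep ℂ G) [CategoryTheory.Simple V] :
    ∑ g : G, (Complex.normSq (V.character g) : ℝ) = (Fintype.card G : ℝ) := by
  have hc : (Fintype.card G : ℂ) ≠ 0 := by exact_mod_cast Fintype.card_ne_zero
  letI : Fintype G := ‹Fintype G›
  haveI : Invertible ((Fintype.card G : ℂ)) := invertibleOfNonzero hc
  have h := FDRep.char_orthonormal (k := ℂ) (G := G) V V
  rw [if_pos ⟨CategoryTheory.Iso.refl V⟩] at h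
  have h2 : ∑ g : G, V.character g * V.character g⁻¹ = (Fintype.card G : ℂ) := by
    have := congrArg (fun x => (Fintype.card G : ℂ) * x) h
    simpa [smul_eq_mul, ← mul_assoc, Nat.card_eq_fintype_card, mul_inv_cancel₀ hc] using this
  have h3 : ((∑ g : G, (Complex.normSq (V.character g) : ℝ) : ℝ) : ℂ)
      = (Fintype.card G : ℂ) := by
    rw [← h2]
    push_cast
    refine Finset.sum_congr rfl fun g _ => ?_
    rw [← (char_facts V g).2, Complex.mul_conj]
  exact_mod_cast h3

end Helpers

theorem stmt19 {G : Type} [Group G] [Fintype G] (n : ℕ) (hn : 2 ≤ n)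
    (χ : Fin n → G → ℂ) (hirr : ∀ i, IsIrrChar G (χ i)) (i₀ : Fin n)
    (hmax : ∀ i, ‖χ i 1‖ ≤ ‖χ i₀ 1‖)
    (heq : ‖cInner G (∏ i, χ i) (∏ i, χ i)‖ =
      ∏ i ∈ Finset.univ.erase i₀, Complex.normSq (χ i 1)) :
    ∀ g : G, χ i₀ g = 0 ∨
      ‖∏ i ∈ Finset.univ.erase i₀, χ i g‖ =
        ∏ i ∈ Finset.univ.erase i₀, ‖χ i 1‖ := by
  classical
  set E := Finset.univ.erase i₀ with hE
  set c := Fintype.card G with hc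
  set a : G → ℝ := fun g => Complex.normSq (χ i₀ g) with ha
  set b : G → ℝ := fun g => ∏ i ∈ E, Complex.normSq (χ i g) with hb
  set M : ℝ := ∏ i ∈ E, Complex.normSq (χ i 1) with hM
  have habs : ∀ i g, ‖χ i g‖ ≤ ‖χ i 1‖ := by
    intro i g
    obtain ⟨V, hs, hch⟩ := hirr i
    rw [← hch]
    exact (char_facts V g).1
  have horth : ∑ g : G, a g = (c : ℝ) := by
    obtain ⟨V, hs, hch⟩ := hirr i₀
    haveI := hs
    have := char_sum_normSq V
    simp only [hch] at this
    exact this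
  -- compute the LHS of heq
  have hψ : ∀ g : G, Complex.normSq ((∏ i, χ i) g) = a g * b g := by
    intro g
    rw [Finset.prod_apply, ← Finset.mul_prod_erase Finset.univ _ (Finset.mem_univ i₀)]
    rw [map_mul, map_prod]
  have hcin : cInner G (∏ i, χ i) (∏ i, χ i)
      = (((c : ℝ)⁻¹ * ∑ g : G, a g * b g : ℝ) : ℂ) := by
    rw [cInner]
    push_cast
    congr 1
    refine Finset.sum_congr rfl fun g _ => ?_
    rw [Complex.mul_conj, hψ g]
    push_cast
    ring
  have hcpos : (0 : ℝ) < (c : ℝ) := by exact_mod_cast Fintype.card_pos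
  have habsum : ∑ g : G, a g * b g = c * M := by
    rw [hcin] at heq
    rw [Complex.norm_real, Real.norm_eq_abs] at heq
    have hnn : (0:ℝ) ≤ (c : ℝ)⁻¹ * ∑ g : G, a g * b g := by
      apply mul_nonneg (by positivity)
      apply Finset.sum_nonneg
      intro g _
      apply mul_nonneg (Complex.normSq_nonneg _)
      exact Finset.prod_nonneg fun i _ => Complex.normSq_nonneg _
    rw [abs_of_nonneg hnn] at heq
    field_simp at heq
    linarith [heq]
  have hbM : ∀ g : G, b g ≤ M := by
    intro g
    apply Finset.prod_le_prod
    · intro i _; exact Complex.normSq_nonneg _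
    · intro i _
      rw [← Complex.sq_norm, ← Complex.sq_norm]
      exact pow_le_pow_left₀ (norm_nonneg _) (habs i g) 2
  have hanneg : ∀ g : G, 0 ≤ a g := fun g => Complex.normSq_nonneg _
  have hzero : ∑ g : G, a g * (M - b g) = 0 := by
    have : ∑ g : G, a g * (M - b g)
        = (∑ g : G, a g) * M - ∑ g : G, a g * b g := by
      rw [Finset.sum_mul]
      rw [← Finset.sum_sub_distrib]
      refine Finset.sum_congr rfl fun g _ => by ring
    rw [this, horth, habsum]
    ring
  have hterm : ∀ g : G, a g * (M - b g) = 0 := by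
    have := (Finset.sum_eq_zero_iff_of_nonneg ?_).mp hzero
    · intro g; exact this g (Finset.mem_univ g)
    · intro g _
      exact mul_nonneg (hanneg g) (sub_nonneg.mpr (hbM g))
  intro g
  rcases mul_eq_zero.mp (hterm g) with h | h
  · left
    exact Complex.normSq_eq_zero.mp h
  · right
    have hbg : b g = M := by linarith
    have h1 : ‖∏ i ∈ E, χ i g‖ ^ 2 = b g := by
      rw [Complex.sq_norm]
      exact map_prod Complex.normSq _ _
    have h2 : (∏ i ∈ E, ‖χ i 1‖) ^ 2 = M := by
      rw [← Finset.prod_pow]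
      exact Finset.prod_congr rfl fun i _ => Complex.sq_norm _
    have h3 : ‖∏ i ∈ E, χ i g‖ ^ 2
        = (∏ i ∈ E, ‖χ i 1‖) ^ 2 := by rw [h1, h2, hbg]
    have hx : (0:ℝ) ≤ ‖∏ i ∈ E, χ i g‖ := norm_nonneg _
    have hy : (0:ℝ) ≤ ∏ i ∈ E, ‖χ i 1‖ :=
      Finset.prod_nonneg fun i _ => norm_nonneg _
    calc ‖∏ i ∈ E, χ i g‖
        = Real.sqrt (‖∏ i ∈ E, χ i g‖ ^ 2) := (Real.sqrt_sq hx).symm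
      _ = Real.sqrt ((∏ i ∈ E, ‖χ i 1‖) ^ 2) := by rw [h3]
      _ = ∏ i ∈ E, ‖χ i 1‖ := Real.sqrt_sq hy
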